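/- With L, q, p, Π as closed-form functions of (g, L_g) given by L = N[(1−τ)(mL_g+αF)+(mg+F)mN]/(α+(Nm−α)τ), q = (1−τ)(L+L_g−αg)/((Nm+α(1−τ))(L+L_g)), p = mw(L+L_g)/(L+L_g−α((L+L_g)q+g)), Π = ((L+L_g)q+g)(p−mw) − Fw, assume Nm > α, τ ∈ (0,1), F > 0, w > 0, g ≥ 0, L_g ≥ 0, L+L_g−αg > 0. If additionally α > 1 − τ, then ∂Π/∂g > ∂Π/∂L_g: when the tax rate is high enough, government purchase is more favorable to firms than government employment. -/

import Mathlib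

private lemma keyP (x α τ : ℝ) (h1 : 0 < α) (h2 : α < x) (h3 : 1 - τ < α) (h4 : 0 < τ)
    (h5 : τ < 1) :
    0 < (x*(1+τ)+α*(1-τ)+τ-1) * x^2 - (α*(1-τ)+x*τ) * (2*α*(x-1+τ)+x*(x-α-1)) := by
  have hu : 0 < x - α := sub_pos.2 h2
  have h1τ : (0:ℝ) < 1 - τ := by linarith
  have hmul : (1-τ)*(1-τ) < α*(1-τ) := mul_lt_mul_of_pos_right h3 h1τ
  have hmul2 : (1-τ)*(2-τ) < α*(2-τ) := mul_lt_mul_of_pos_right h3 (by linarith)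
  have hC : 0 < 3*α - 1 + 2*τ - α*τ := by nlinarith [sq_nonneg τ]
  have hB : 0 < α*(2*α - α*τ - 1 + 5*τ - 2*τ^2) := by
    have : 0 < 2*α - α*τ - 1 + 5*τ - 2*τ^2 := by
      nlinarith [mul_pos h4 (show (0:ℝ) < 2-τ by linarith)]
    exact mul_pos h1 this
  have hA : 0 < α^2*(2-τ) := mul_pos (by positivity) (by linarith)
  nlinarith [mul_pos hB hu, mul_pos (mul_pos hu hu) hC, pow_pos hu 3]

private lemma keyCS (x α τ : ℝ) (h2 : α < x) (h3 : 1 - τ < α) (h4 : 0 < τ) (h5 : τ < 1) :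
    0 < x*(1+τ)+α*(1-τ)+τ-1 := by
  have e1 : (1-τ)*(1-τ) < α*(1-τ) := mul_lt_mul_of_pos_right h3 (by linarith)
  have e2 : (1-τ)*(1+τ) < x*(1+τ) := mul_lt_mul_of_pos_right (h3.trans h2) (by linarith)
  nlinarith

/-- Closed form of the profit function. -/
private lemma master (α N m F w τ s a : ℝ) (hN0 : N ≠ 0) (hm0 : N*m ≠ 0)
    (hK0 : N*m+α*(1-τ) ≠ 0) (hs : s ≠ 0) (hb : s - α*a ≠ 0) :
    (s * ((1-τ)*(s-α*a)/((N*m+α*(1-τ))*s)) + a) *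
        (m*w*s/(s - α*(s * ((1-τ)*(s-α*a)/((N*m+α*(1-τ))*s)) + a)) - m*w) - F*w
      = w*α*((1-τ)*s+N*m*a)^2/((N*m+α*(1-τ))*N*(s-α*a)) - F*w := by
  have h1 : s * ((1-τ)*(s-α*a)/((N*m+α*(1-τ))*s)) + a
      = ((1-τ)*s + N*m*a)/(N*m+α*(1-τ)) := by
    generalize hKv : N*m+α*(1-τ) = K at hK0 ⊢
    field_simp
    subst hKv
    ring
  rw [h1]
  have h2 : s - α*(((1-τ)*s + N*m*a)/(N*m+α*(1-τ))) = N*m*(s-α*a)/(N*m+α*(1-τ)) := by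
    field_simp
    ring
  rw [h2]
  have h3 : N*m*(s-α*a)/(N*m+α*(1-τ)) ≠ 0 := div_ne_zero (mul_ne_zero hm0 hb) hK0
  have hm : m ≠ 0 := right_ne_zero_of_mul hm0
  generalize hKv : N*m+α*(1-τ) = K at hK0 h3 ⊢
  generalize hBv : s - α*a = B at hb h3 ⊢
  field_simp
  subst hKv hBv
  ring

set_option maxHeartbeats 2000000 in
/-- With a sufficiently high tax rate, government purchase is more favorable to firms
than government employment. -/
theorem stmt_19 (α N m F w τ : ℝ) (hα : 0 < α) (hN : 0 < N) (hm : 0 < m)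
    (hF : 0 < F) (hw : 0 < w) (hτ0 : 0 < τ) (hτ1 : τ < 1) (hNm : N * m > α)
    (g Lg : ℝ) (hg : 0 ≤ g) (hLg : 0 ≤ Lg)
    (hden : 0 < N * ((1 - τ) * (m * Lg + α * F) + (m * g + F) * m * N) / (α + (N * m - α) * τ)
      + Lg - α * g)
    (hατ : α > 1 - τ) :
    let Pi := fun g Lg : ℝ =>
      let L := N * ((1 - τ) * (m * Lg + α * F) + (m * g + F) * m * N) / (α + (N * m - α) * τ)
      let q := (1 - τ) * (L + Lg - α * g) / ((N * m + α * (1 - τ)) * (L + Lg))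
      let p := m * w * (L + Lg) / (L + Lg - α * ((L + Lg) * q + g))
      ((L + Lg) * q + g) * (p - m * w) - F * w
    deriv (fun g => Pi g Lg) g > deriv (fun Lg => Pi g Lg) Lg := by
  intro Pi
  have hτ' : (0:ℝ) < 1 - τ := by linarith
  have hD : 0 < α + (N*m - α)*τ := by nlinarith
  have hK : 0 < N*m + α*(1-τ) := by nlinarith
  have hD0 := hD.ne'
  have hK0 := hK.ne'
  have hNm0 : N*m ≠ 0 := (mul_pos hN hm).ne'
  have hPi : ∀ a b : ℝ, Pi a b =
      ((N * ((1 - τ) * (m * b + α * F) + (m * a + F) * m * N) / (α + (N * m - α) * τ) + b) *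
        ((1 - τ) * ((N * ((1 - τ) * (m * b + α * F) + (m * a + F) * m * N) / (α + (N * m - α) * τ) + b) - α * a) /
          ((N * m + α * (1 - τ)) * (N * ((1 - τ) * (m * b + α * F) + (m * a + F) * m * N) / (α + (N * m - α) * τ) + b))) + a) *
        (m * w * (N * ((1 - τ) * (m * b + α * F) + (m * a + F) * m * N) / (α + (N * m - α) * τ) + b) /
          ((N * ((1 - τ) * (m * b + α * F) + (m * a + F) * m * N) / (α + (N * m - α) * τ) + b) -
            α * ((N * ((1 - τ) * (m * b + α * F) + (m * a + F) * m * N) / (α + (N * m - α) * τ) + b) *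
              ((1 - τ) * ((N * ((1 - τ) * (m * b + α * F) + (m * a + F) * m * N) / (α + (N * m - α) * τ) + b) - α * a) /
                ((N * m + α * (1 - τ)) * (N * ((1 - τ) * (m * b + α * F) + (m * a + F) * m * N) / (α + (N * m - α) * τ) + b))) + a)) - m * w) -
        F * w := fun a b => rfl

  -- affine coefficients of S, A, B as functions of g (point Lg fixed)
  set aS := m^2*N^2/(α + (N*m - α)*τ) with haS
  set c0 := N*((1-τ)*(m*Lg+α*F) + F*m*N)/(α + (N*m - α)*τ) + Lg with hc0
  set aA := (1-τ)*aS + N*m with haA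
  set bA := (1-τ)*c0 with hbA
  set aB := aS - α with haB
  -- affine coefficients as functions of Lg (point g fixed)
  set cS := N*(1-τ)*m/(α + (N*m - α)*τ) + 1 with hcS
  set e0 := N*((1-τ)*(α*F) + (m*g+F)*m*N)/(α + (N*m - α)*τ) with he0
  set cA := (1-τ)*cS with hcA
  set dA := (1-τ)*e0 + N*m*g with hdA
  set dB := e0 - α*g with hdB
  -- positivity at the point
  have hBpt : 0 < aB*g + c0 := by
    have h' : aB*g + c0 = N * ((1 - τ) * (m * Lg + α * F) + (m * g + F) * m * N) /
        (α + (N * m - α) * τ) + Lg - α * g := by rw [haB, haS, hc0]; ring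
    rw [h']; exact hden
  have hSpt : 0 < aS*g + c0 := by
    have h' : aS*g + c0 = (aB*g + c0) + α*g := by rw [haB]; ring
    rw [h']; nlinarith [mul_nonneg hα.le hg]
  have hApt : 0 < aA*g + bA := by
    have h' : aA*g + bA = (1-τ)*(aS*g + c0) + N*m*g := by rw [haA, hbA]; ring
    rw [h']; nlinarith [mul_pos hτ' hSpt, mul_nonneg (mul_pos hN hm).le hg]
  have hAeq : cA*Lg + dA = aA*g + bA := by
    rw [hcA, hdA, haA, hbA, hcS, he0, haS, hc0]; ring
  have hBeq : cS*Lg + dB = aB*g + c0 := by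
    rw [hdB, hcS, he0, haB, haS, hc0]; ring
  have hSeq : cS*Lg + e0 = aS*g + c0 := by
    rw [hcS, he0, haS, hc0]; ring
  -- eventual equality in the g direction
  have hev1 : (fun y => Pi y Lg) =ᶠ[nhds g]
      (fun y : ℝ => w*α*(aA*y+bA)^2/((N*m+α*(1-τ))*N*(aB*y+c0)) - F*w) := by
    have ho : IsOpen {y : ℝ | 0 < aB*y + c0 ∧ 0 < aS*y + c0} :=
      IsOpen.and (isOpen_lt continuous_const (by fun_prop))
        (isOpen_lt continuous_const (by fun_prop))
    apply Filter.eventuallyEq_of_mem (ho.mem_nhds ⟨hBpt, hSpt⟩)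
    rintro y ⟨hy1, hy2⟩
    have hsy : N*((1-τ)*(m*Lg+α*F)+(m*y+F)*m*N)/(α+(N*m-α)*τ) + Lg = aS*y + c0 := by
      rw [haS, hc0]; ring
    have hsy0 : N*((1-τ)*(m*Lg+α*F)+(m*y+F)*m*N)/(α+(N*m-α)*τ) + Lg ≠ 0 := by
      rw [hsy]; exact hy2.ne'
    have hby' : (N*((1-τ)*(m*Lg+α*F)+(m*y+F)*m*N)/(α+(N*m-α)*τ) + Lg) - α*y = aB*y + c0 := by
      rw [hsy, haB]; ring
    have hby0 : (N*((1-τ)*(m*Lg+α*F)+(m*y+F)*m*N)/(α+(N*m-α)*τ) + Lg) - α*y ≠ 0 := by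
      rw [hby']; exact hy1.ne'
    show Pi y Lg = _
    rw [hPi y Lg,
      master α N m F w τ (N*((1-τ)*(m*Lg+α*F)+(m*y+F)*m*N)/(α+(N*m-α)*τ) + Lg) y
        hN.ne' hNm0 hK0 hsy0 hby0]
    have g1 : (1-τ)*(N*((1-τ)*(m*Lg+α*F)+(m*y+F)*m*N)/(α+(N*m-α)*τ) + Lg) + N*m*y
        = aA*y + bA := by rw [hsy, haA, hbA]; ring
    rw [g1, hby']
  -- eventual equality in the Lg direction
  have hev2 : (fun t => Pi g t) =ᶠ[nhds Lg]
      (fun t : ℝ => w*α*(cA*t+dA)^2/((N*m+α*(1-τ))*N*(cS*t+dB)) - F*w) := by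
    have hBpt2 : 0 < cS*Lg + dB := by rw [hBeq]; exact hBpt
    have hSpt2 : 0 < cS*Lg + e0 := by rw [hSeq]; exact hSpt
    have ho : IsOpen {t : ℝ | 0 < cS*t + dB ∧ 0 < cS*t + e0} :=
      IsOpen.and (isOpen_lt continuous_const (by fun_prop))
        (isOpen_lt continuous_const (by fun_prop))
    apply Filter.eventuallyEq_of_mem (ho.mem_nhds ⟨hBpt2, hSpt2⟩)
    rintro t ⟨ht1, ht2⟩
    have hsy : N*((1-τ)*(m*t+α*F)+(m*g+F)*m*N)/(α+(N*m-α)*τ) + t = cS*t + e0 := by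
      rw [hcS, he0]; ring
    have hsy0 : N*((1-τ)*(m*t+α*F)+(m*g+F)*m*N)/(α+(N*m-α)*τ) + t ≠ 0 := by
      rw [hsy]; exact ht2.ne'
    have hby' : (N*((1-τ)*(m*t+α*F)+(m*g+F)*m*N)/(α+(N*m-α)*τ) + t) - α*g = cS*t + dB := by
      rw [hsy, hdB]; ring
    have hby0 : (N*((1-τ)*(m*t+α*F)+(m*g+F)*m*N)/(α+(N*m-α)*τ) + t) - α*g ≠ 0 := by
      rw [hby']; exact ht1.ne'
    show Pi g t = _
    rw [hPi g t,
      master α N m F w τ (N*((1-τ)*(m*t+α*F)+(m*g+F)*m*N)/(α+(N*m-α)*τ) + t) g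
        hN.ne' hNm0 hK0 hsy0 hby0]
    have g1 : (1-τ)*(N*((1-τ)*(m*t+α*F)+(m*g+F)*m*N)/(α+(N*m-α)*τ) + t) + N*m*g
        = cA*t + dA := by rw [hsy, hcA, hdA]; ring
    rw [g1, hby']
  -- derivatives of the closed forms
  have hden1 : (N*m+α*(1-τ))*N*(aB*g+c0) ≠ 0 := (mul_pos (mul_pos hK hN) hBpt).ne'
  have hder1 : HasDerivAt (fun y : ℝ => w*α*(aA*y+bA)^2/((N*m+α*(1-τ))*N*(aB*y+c0)) - F*w)
      ((w*α*(2*(aA*g+bA)*aA) * ((N*m+α*(1-τ))*N*(aB*g+c0))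
        - w*α*(aA*g+bA)^2 * ((N*m+α*(1-τ))*N*aB)) / ((N*m+α*(1-τ))*N*(aB*g+c0))^2) g := by
    have l1 : HasDerivAt (fun y : ℝ => aA*y+bA) aA g := by
      simpa using ((hasDerivAt_id g).const_mul aA).add_const bA
    have l2 : HasDerivAt (fun y : ℝ => (aA*y+bA)^2) (2*(aA*g+bA)*aA) g := by
      simpa using l1.fun_pow 2
    have l3 : HasDerivAt (fun y : ℝ => w*α*(aA*y+bA)^2) (w*α*(2*(aA*g+bA)*aA)) g :=
      l2.const_mul (w*α)
    have l4 : HasDerivAt (fun y : ℝ => (N*m+α*(1-τ))*N*(aB*y+c0)) ((N*m+α*(1-τ))*N*aB) g := by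
      simpa using (((hasDerivAt_id g).const_mul aB).add_const c0).const_mul ((N*m+α*(1-τ))*N)
    exact (l3.div l4 hden1).sub_const (F*w)
  have hBpt2 : 0 < cS*Lg + dB := by rw [hBeq]; exact hBpt
  have hden2 : (N*m+α*(1-τ))*N*(cS*Lg+dB) ≠ 0 := (mul_pos (mul_pos hK hN) hBpt2).ne'
  have hder2 : HasDerivAt (fun t : ℝ => w*α*(cA*t+dA)^2/((N*m+α*(1-τ))*N*(cS*t+dB)) - F*w)
      ((w*α*(2*(cA*Lg+dA)*cA) * ((N*m+α*(1-τ))*N*(cS*Lg+dB))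
        - w*α*(cA*Lg+dA)^2 * ((N*m+α*(1-τ))*N*cS)) / ((N*m+α*(1-τ))*N*(cS*Lg+dB))^2) Lg := by
    have l1 : HasDerivAt (fun t : ℝ => cA*t+dA) cA Lg := by
      simpa using ((hasDerivAt_id Lg).const_mul cA).add_const dA
    have l2 : HasDerivAt (fun t : ℝ => (cA*t+dA)^2) (2*(cA*Lg+dA)*cA) Lg := by
      simpa using l1.fun_pow 2
    have l3 : HasDerivAt (fun t : ℝ => w*α*(cA*t+dA)^2) (w*α*(2*(cA*Lg+dA)*cA)) Lg :=
      l2.const_mul (w*α)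
    have l4 : HasDerivAt (fun t : ℝ => (N*m+α*(1-τ))*N*(cS*t+dB)) ((N*m+α*(1-τ))*N*cS) Lg := by
      simpa using (((hasDerivAt_id Lg).const_mul cS).add_const dB).const_mul ((N*m+α*(1-τ))*N)
    exact (l3.div l4 hden2).sub_const (F*w)
  have hd1 : deriv (fun y => Pi y Lg) g
      = (w*α*(2*(aA*g+bA)*aA) * ((N*m+α*(1-τ))*N*(aB*g+c0))
        - w*α*(aA*g+bA)^2 * ((N*m+α*(1-τ))*N*aB)) / ((N*m+α*(1-τ))*N*(aB*g+c0))^2 :=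
    hev1.deriv_eq.trans hder1.deriv
  have hd2 : deriv (fun t => Pi g t) Lg
      = (w*α*(2*(cA*Lg+dA)*cA) * ((N*m+α*(1-τ))*N*(cS*Lg+dB))
        - w*α*(cA*Lg+dA)^2 * ((N*m+α*(1-τ))*N*cS)) / ((N*m+α*(1-τ))*N*(cS*Lg+dB))^2 :=
    hev2.deriv_eq.trans hder2.deriv
  rw [gt_iff_lt, hd1, hd2, hAeq, hBeq]
  -- the key inequality
  have hP : 0 < ((N*m)*(1+τ)+α*(1-τ)+τ-1) * (N*m)^2
      - (α*(1-τ)+(N*m)*τ) * (2*α*((N*m)-1+τ)+(N*m)*((N*m)-α-1)) :=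
    keyP (N*m) α τ hα hNm hατ hτ0 hτ1
  have hcSpos : 0 < (N*m)*(1+τ)+α*(1-τ)+τ-1 := keyCS (N*m) α τ hNm hατ hτ0 hτ1
  have hSD : (aS*g+c0)*(α+(N*m-α)*τ)
      = (N*m)^2*g + N*(1-τ)*m*Lg + Lg*(α+(N*m-α)*τ) + N*(1-τ)*(α*F) + N*m*N*F := by
    rw [haS, hc0]
    generalize hDv : α + (N*m - α)*τ = D at hD0 ⊢
    field_simp
    subst hDv
    ring
  have hE : 0 < 2*(aB*g+c0)*(N*m-1+τ) - (aA*g+bA)*(N*m-α-1) := by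
    have r1 : aB*g+c0 = (aS*g+c0) - α*g := by rw [haB]; ring
    have r2 : aA*g+bA = (1-τ)*(aS*g+c0) + N*m*g := by rw [haA, hbA]; ring
    have hED : (2*(aB*g+c0)*(N*m-1+τ) - (aA*g+bA)*(N*m-α-1)) * (α+(N*m-α)*τ)
        = ((N*m)*(1+τ)+α*(1-τ)+τ-1)
            * (N*(1-τ)*m*Lg + Lg*(α+(N*m-α)*τ) + N*(1-τ)*(α*F) + N*m*N*F)
          + g * (((N*m)*(1+τ)+α*(1-τ)+τ-1) * (N*m)^2
            - (α*(1-τ)+(N*m)*τ) * (2*α*((N*m)-1+τ)+(N*m)*((N*m)-α-1))) := by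
      rw [r1, r2]
      linear_combination ((N*m)*(1+τ)+α*(1-τ)+τ-1) * hSD
    have hpos2 : 0 < N*(1-τ)*m*Lg + Lg*(α+(N*m-α)*τ) + N*(1-τ)*(α*F) + N*m*N*F := by
      have t1 : 0 ≤ N*(1-τ)*m*Lg := by positivity
      have t2 : 0 ≤ Lg*(α+(N*m-α)*τ) := mul_nonneg hLg hD.le
      have t3 : 0 < N*(1-τ)*(α*F) := by positivity
      have t4 : 0 < N*m*N*F := by positivity
      linarith
    have hEDpos : 0 < (2*(aB*g+c0)*(N*m-1+τ) - (aA*g+bA)*(N*m-α-1)) * (α+(N*m-α)*τ) := by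
      rw [hED]
      have h1 := mul_pos hcSpos hpos2
      have h2 := mul_nonneg hg hP.le
      linarith
    by_contra hcon
    push_neg at hcon
    linarith [hEDpos, mul_nonneg (neg_nonneg.2 hcon) hD.le]
  have hAc : aA - cA = (N*m+α*(1-τ))*(N*m-1+τ)/(α+(N*m-α)*τ) := by
    rw [haA, hcA, hcS, haS]
    generalize hDv : α + (N*m - α)*τ = D at hD0 ⊢
    field_simp
    subst hDv
    ring
  have hBc : aB - cS = (N*m+α*(1-τ))*(N*m-α-1)/(α+(N*m-α)*τ) := by
    rw [haB, hcS, haS]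
    generalize hDv : α + (N*m - α)*τ = D at hD0 ⊢
    field_simp
    subst hDv
    ring
  have hkey : 0 < 2*(aA*g+bA)*(aB*g+c0)*(aA-cA) - (aA*g+bA)^2*(aB-cS) := by
    have hid : 2*(aA*g+bA)*(aB*g+c0)*(aA-cA) - (aA*g+bA)^2*(aB-cS)
        = ((N*m+α*(1-τ))/(α+(N*m-α)*τ))
            * ((aA*g+bA) * (2*(aB*g+c0)*(N*m-1+τ) - (aA*g+bA)*(N*m-α-1))) := by
      rw [hAc, hBc]
      ring
    rw [hid]
    exact mul_pos (div_pos hK hD) (mul_pos hApt hE)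
  have hnum : (w*α*(2*(aA*g+bA)*cA) * ((N*m+α*(1-τ))*N*(aB*g+c0))
        - w*α*(aA*g+bA)^2 * ((N*m+α*(1-τ))*N*cS))
      < (w*α*(2*(aA*g+bA)*aA) * ((N*m+α*(1-τ))*N*(aB*g+c0))
        - w*α*(aA*g+bA)^2 * ((N*m+α*(1-τ))*N*aB)) := by
    have hid2 : (w*α*(2*(aA*g+bA)*aA) * ((N*m+α*(1-τ))*N*(aB*g+c0))
          - w*α*(aA*g+bA)^2 * ((N*m+α*(1-τ))*N*aB))
        - (w*α*(2*(aA*g+bA)*cA) * ((N*m+α*(1-τ))*N*(aB*g+c0))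
          - w*α*(aA*g+bA)^2 * ((N*m+α*(1-τ))*N*cS))
        = (w*α*((N*m+α*(1-τ))*N))
            * (2*(aA*g+bA)*(aB*g+c0)*(aA-cA) - (aA*g+bA)^2*(aB-cS)) := by ring
    have hprod := mul_pos (mul_pos (mul_pos hw hα) (mul_pos hK hN)) hkey
    exact sub_pos.mp (by rw [hid2]; exact hprod)
  have hDn : 0 < ((N*m+α*(1-τ))*N*(aB*g+c0))^2 :=
    pow_pos (mul_pos (mul_pos hK hN) hBpt) 2
  exact div_lt_div_of_pos_right hnum hDn
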